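/- Let Γ be a player-specific congestion game on a circle whose transition graph contains a directed cycle. Then every player changes its strategy at least twice on every directed cycle of TG(Γ). -/

import Mathlib

open scoped ENNReal NNReal

/-- A player-specific singleton congestion game on a circle with `n` players:
the resources are `0, …, n-1`, and player `i` chooses between resource `i`
(its 0-strategy, with delay function `d0 i`) and resource `i+1 (mod n)`
(its 1-strategy, with delay function `d1 i`). The delay functions are strictly
increasing and ties are broken (for each player the delays of its two resources
at congestions `1 ≤ k ≤ n` are pairwise distinct). -/
structure CircleGame (n : ℕ) where
  d0 : Fin n → ℕ → ℕ
  d1 : Fin n → ℕ → ℕ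
  mono0 : ∀ i, StrictMono (d0 i)
  mono1 : ∀ i, StrictMono (d1 i)
  tie : ∀ i : Fin n, ∀ k, 1 ≤ k → k ≤ n → ∀ k', 1 ≤ k' → k' ≤ n → d0 i k ≠ d1 i k'

namespace CircleGame

variable {n : ℕ} [NeZero n]

/-- A state is a function `s : Fin n → Bool`: `s i = false` iff player `i` plays its
0-strategy (resource `i`), and `s i = true` iff it plays its 1-strategy (resource `i+1`).
`cong s r` is the congestion of resource `r`: resource `r` is allocated by player `r`
(if it plays its 0-strategy) and by player `r-1` (if it plays its 1-strategy). -/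
def cong (s : Fin n → Bool) (r : Fin n) : ℕ :=
  (if s r = false then 1 else 0) + (if s (r - 1) = true then 1 else 0)

/-- The current resource of player `i` is a best response to state `s`. -/
def CurrentBR (G : CircleGame n) (s : Fin n → Bool) (i : Fin n) : Prop :=
  if s i = false then G.d0 i (cong s i) ≤ G.d1 i (cong s (i + 1) + 1)
  else G.d1 i (cong s (i + 1)) ≤ G.d0 i (cong s i + 1)

/-- One best-response step: a player whose current resource is not a best response
switches to its (unique) other resource, which is then its best response. -/
def Step (G : CircleGame n) (s s' : Fin n → Bool) : Prop :=
  ∃ i, ¬ G.CurrentBR s i ∧ s' = Function.update s i (!(s i))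

/-- Nash equilibrium: every player's current resource is a best response. -/
def IsNash (G : CircleGame n) (s : Fin n → Bool) : Prop := ∀ i, G.CurrentBR s i

/-- type 1 : `d_{r_i}(1) < d_{r_i}(2) < d_{r_{i+1}}(1) < d_{r_{i+1}}(2)`. -/
def IsType1 (G : CircleGame n) (i : Fin n) : Prop :=
  G.d0 i 1 < G.d0 i 2 ∧ G.d0 i 2 < G.d1 i 1 ∧ G.d1 i 1 < G.d1 i 2

/-- type 1' : roles of the two resources exchanged. -/
def IsType1' (G : CircleGame n) (i : Fin n) : Prop :=
  G.d1 i 1 < G.d1 i 2 ∧ G.d1 i 2 < G.d0 i 1 ∧ G.d0 i 1 < G.d0 i 2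

/-- type 2 : `d_{r_i}(1) < d_{r_{i+1}}(1) < d_{r_i}(2) < d_{r_{i+1}}(2)`. -/
def IsType2 (G : CircleGame n) (i : Fin n) : Prop :=
  G.d0 i 1 < G.d1 i 1 ∧ G.d1 i 1 < G.d0 i 2 ∧ G.d0 i 2 < G.d1 i 2

/-- type 2' : roles of the two resources exchanged. -/
def IsType2' (G : CircleGame n) (i : Fin n) : Prop :=
  G.d1 i 1 < G.d0 i 1 ∧ G.d0 i 1 < G.d1 i 2 ∧ G.d1 i 2 < G.d0 i 2

/-- type 3 : `d_{r_i}(1) < d_{r_{i+1}}(1) < d_{r_{i+1}}(2) < d_{r_i}(2)`. -/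
def IsType3 (G : CircleGame n) (i : Fin n) : Prop :=
  G.d0 i 1 < G.d1 i 1 ∧ G.d1 i 1 < G.d1 i 2 ∧ G.d1 i 2 < G.d0 i 2

/-- type 3' : roles of the two resources exchanged. -/
def IsType3' (G : CircleGame n) (i : Fin n) : Prop :=
  G.d1 i 1 < G.d0 i 1 ∧ G.d0 i 1 < G.d0 i 2 ∧ G.d0 i 2 < G.d1 i 2

/-- Resource `r_i` is a termination point for overload tokens: the pair of types of
players `i-1` and `i` is one of `(2',2), (3,3'), (3,2), (2',3')`. -/
def OverloadTP (G : CircleGame n) (i : Fin n) : Prop :=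
  (G.IsType2' (i - 1) ∧ G.IsType2 i) ∨ (G.IsType3 (i - 1) ∧ G.IsType3' i) ∨
  (G.IsType3 (i - 1) ∧ G.IsType2 i) ∨ (G.IsType2' (i - 1) ∧ G.IsType3' i)

/-- Resource `r_i` is a termination point for underload tokens: the pair of types of
players `i-1` and `i` is one of `(2,2'), (3,3'), (2,3'), (3,2')`. -/
def UnderloadTP (G : CircleGame n) (i : Fin n) : Prop :=
  (G.IsType2 (i - 1) ∧ G.IsType2' i) ∨ (G.IsType3 (i - 1) ∧ G.IsType3' i) ∨
  (G.IsType2 (i - 1) ∧ G.IsType3' i) ∨ (G.IsType3 (i - 1) ∧ G.IsType2' i)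

open scoped Classical in
/-- The set of players whose current resource is not a best response. -/
noncomputable def unsat (G : CircleGame n) (s : Fin n → Bool) : Finset (Fin n) :=
  Finset.univ.filter fun i => ¬ G.CurrentBR s i

/-- One step of the random best response dynamics: in a state that is not a Nash
equilibrium, a player whose current resource is not a best response is selected
uniformly at random and switches to its best response; Nash equilibria are absorbing. -/
noncomputable def stepPMF (G : CircleGame n) (s : Fin n → Bool) : PMF (Fin n → Bool) :=
  if h : (G.unsat s).Nonempty then
    (PMF.uniformOfFinset (G.unsat s) h).bind fun i => PMF.pure (Function.update s i (!(s i)))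
  else PMF.pure s

/-- The distribution of the random best response dynamics after `t` steps, started in `s`. -/
noncomputable def walk (G : CircleGame n) (s : Fin n → Bool) : ℕ → PMF (Fin n → Bool)
  | 0 => PMF.pure s
  | t + 1 => (walk G s t).bind G.stepPMF

open scoped Classical in
/-- The expected number of steps until the random best response dynamics started in `s`
reaches a Nash equilibrium: since Nash equilibria are absorbing, this is
`∑_{t ≥ 0} Pr[X_t is not a Nash equilibrium]`. -/
noncomputable def expTime (G : CircleGame n) (s : Fin n → Bool) : ℝ≥0∞ :=
  ∑' t : ℕ, ∑ s' ∈ Finset.univ.filter (fun s' => ¬ G.IsNash s'), G.walk s t s'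

end CircleGame


section Aux

private lemma bool_no_rise (g : ℕ → Bool) (L : ℕ) (hg : g L = g 0)
    (hno : ∀ k, k < L → ¬(g k = false ∧ g (k + 1) = true)) :
    ∀ k, k ≤ L → g k = g 0 := by
  cases h0 : g 0 with
  | false =>
    intro k hk
    induction k with
    | zero => exact h0
    | succ m ih =>
      have hm := ih (by omega)
      cases hs : g (m + 1) with
      | false => rfl
      | true => exact absurd ⟨hm, hs⟩ (hno m (by omega))
  | true =>
    have hL : g L = true := by rw [hg, h0]
    have key : ∀ m, m ≤ L → g (L - m) = true := by
      intro m
      induction m with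
      | zero => intro _; simpa using hL
      | succ p ih =>
        intro hp
        cases hs : g (L - (p + 1)) with
        | true => rfl
        | false =>
          exfalso
          have h1 : L - (p + 1) + 1 = L - p := by omega
          have h2 : g (L - (p + 1) + 1) = true := by rw [h1]; exact ih (by omega)
          exact hno (L - (p + 1)) (by omega) ⟨hs, h2⟩
    intro k hk
    have := key (L - k) (by omega)
    rw [show L - (L - k) = k by omega] at this
    exact this

private lemma exists_rise (g : ℕ → Bool) (L : ℕ) (hg : g L = g 0)
    (k0 : ℕ) (hk0 : k0 < L) (hflip : g (k0 + 1) ≠ g k0) :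
    ∃ k, k < L ∧ g k = false ∧ g (k + 1) = true := by
  by_contra h
  push_neg at h
  have hno : ∀ k, k < L → ¬(g k = false ∧ g (k + 1) = true) := by
    intro k hk hc
    have := h k hk hc.1
    exact this hc.2
  have h1 := bool_no_rise g L hg hno k0 (by omega)
  have h2 := bool_no_rise g L hg hno (k0 + 1) (by omega)
  exact hflip (by rw [h1, h2])

private lemma flips_both (g : ℕ → Bool) (L : ℕ) (hg : g L = g 0)
    (k0 : ℕ) (hk0 : k0 < L) (hflip : g (k0 + 1) ≠ g k0) :
    (∃ k, k < L ∧ g k = false ∧ g (k + 1) = true) ∧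
    (∃ k, k < L ∧ g k = true ∧ g (k + 1) = false) := by
  refine ⟨exists_rise g L hg k0 hk0 hflip, ?_⟩
  have hg' : (!g L) = (!g 0) := by rw [hg]
  have hflip' : (!g (k0 + 1)) ≠ (!g k0) := by
    intro h; exact hflip (by cases h1 : g (k0+1) <;> cases h2 : g k0 <;> simp_all)
  obtain ⟨k, hk, h1, h2⟩ := exists_rise (fun k => !g k) L hg' k0 hk0 hflip'
  exact ⟨k, hk, by simpa using h1, by simpa using h2⟩

private lemma flip_parity (g : ℕ → Bool) :
    ∀ L, ((Finset.range L).filter fun k => g (k + 1) ≠ g k).card % 2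
      = if g L = g 0 then 0 else 1 := by
  intro L
  induction L with
  | zero => simp
  | succ m ih =>
    rw [Finset.range_add_one, Finset.filter_insert]
    by_cases h : g (m + 1) ≠ g m
    · rw [if_pos h, Finset.card_insert_of_notMem (by simp)]
      cases hA : g (m + 1) <;> cases hB : g m <;> cases hC : g 0 <;> simp_all <;> omega
    · rw [if_neg h]
      cases hA : g (m + 1) <;> cases hB : g m <;> cases hC : g 0 <;> simp_all

end Aux

section TwiceAux

open CircleGame

variable {n : ℕ} [NeZero n]

private lemma fin_one_ne_zero' (hn : 2 ≤ n) : (1 : Fin n) ≠ 0 := by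
  intro h
  have h2 : ((1 : Fin n)).val = 0 := by rw [h]; rfl
  rw [Fin.val_one'] at h2
  rw [Nat.mod_eq_of_lt (by omega)] at h2
  omega

private lemma fin_two_ne_zero' (hn : 3 ≤ n) : (1 + 1 : Fin n) ≠ 0 := by
  intro h
  have h2 : ((1 + 1 : Fin n)).val = 0 := by rw [h]; rfl
  rw [Fin.val_add, Fin.val_one'] at h2
  rw [Nat.mod_eq_of_lt (show 1 < n by omega)] at h2
  rw [Nat.mod_eq_of_lt (show 1 + 1 < n by omega)] at h2
  omega

private lemma step_flip (G : CircleGame n) {s s' : Fin n → Bool}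
    (h : G.Step s s') {j : Fin n} (hj : s' j ≠ s j) :
    ¬ G.CurrentBR s j ∧ s' = Function.update s j (!(s j)) := by
  obtain ⟨m, hm, he⟩ := h
  have hmj : m = j := by
    by_contra hne
    exact hj (by rw [he]; exact Function.update_of_ne (Ne.symm hne) _ _)
  subst hmj
  exact ⟨hm, he⟩

private lemma unhappyF (G : CircleGame n) (s : Fin n → Bool) (j : Fin n)
    (h : ¬ G.CurrentBR s j) (hs : s j = false) :
    G.d1 j (if s (j + 1) = false then 2 else 1) < G.d0 j (if s (j - 1) = true then 2 else 1) := by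
  rw [CircleGame.CurrentBR, if_pos hs] at h
  have h' := not_le.mp h
  have e1 : cong s j = if s (j - 1) = true then 2 else 1 := by
    cases hb : s (j - 1) <;> simp [CircleGame.cong, hs, hb]
  have e2 : cong s (j + 1) + 1 = if s (j + 1) = false then 2 else 1 := by
    have hj' : j + 1 - 1 = j := add_sub_cancel_right _ _
    cases hb : s (j + 1) <;> simp [CircleGame.cong, hj', hs, hb]
  rw [e1, e2] at h'
  exact h'

private lemma unhappyT (G : CircleGame n) (s : Fin n → Bool) (j : Fin n)
    (h : ¬ G.CurrentBR s j) (hs : s j = true) :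
    G.d0 j (if s (j - 1) = true then 2 else 1) < G.d1 j (if s (j + 1) = false then 2 else 1) := by
  rw [CircleGame.CurrentBR, if_neg (by simp [hs])] at h
  have h' := not_le.mp h
  have e1 : cong s j + 1 = if s (j - 1) = true then 2 else 1 := by
    cases hb : s (j - 1) <;> simp [CircleGame.cong, hs, hb]
  have e2 : cong s (j + 1) = if s (j + 1) = false then 2 else 1 := by
    have hj' : j + 1 - 1 = j := add_sub_cancel_right _ _
    cases hb : s (j + 1) <;> simp [CircleGame.cong, hj', hs, hb]
  rw [e1, e2] at h'
  exact h'

omit [NeZero n] in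
private lemma sum_exchange (W W' : Fin n → ℕ) (a b : Fin n) (hab : a ≠ b)
    (hrest : ∀ e, e ≠ a → e ≠ b → W' e = W e) :
    (∑ e, W' e) + (W a + W b) = (∑ e, W e) + (W' a + W' b) := by
  classical
  have hsub : ({a, b} : Finset (Fin n)) ⊆ Finset.univ := Finset.subset_univ _
  rw [← Finset.sum_sdiff hsub (f := W'), ← Finset.sum_sdiff hsub (f := W)]
  rw [Finset.sum_pair hab, Finset.sum_pair hab]
  have hr : ∑ e ∈ Finset.univ \ {a, b}, W' e = ∑ e ∈ Finset.univ \ {a, b}, W e := by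
    refine Finset.sum_congr rfl (fun e he => ?_)
    simp only [Finset.mem_sdiff, Finset.mem_univ, Finset.mem_insert, Finset.mem_singleton,
      true_and] at he
    push_neg at he
    exact hrest e he.1 he.2
  omega

end TwiceAux

section TwiceMain

open CircleGame

variable {n : ℕ} [NeZero n]

private def Wf (f : ℕ → Fin n → Bool) (i : Fin n) (k : ℕ) (e : Fin n) : ℕ :=
  if e ≠ i - 1 ∧ e ≠ i ∧ f k e ≠ f k (e + 1) then 1 else 0

private def Phi (f : ℕ → Fin n → Bool) (i : Fin n) (k : ℕ) : ℕ := ∑ e, Wf f i k e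

private lemma lemA (G : CircleGame n) (L : ℕ) (f : ℕ → Fin n → Bool)
    (hsteps : ∀ k, k < L → G.Step (f k) (f (k + 1))) (hcycle : f L = f 0) (i : Fin n)
    (hfix : ∀ k, k < L → f (k + 1) i = f k i) :
    ∀ k, k < L → f (k + 1) (i + 1) = f k (i + 1) := by
  by_contra hmv
  push_neg at hmv
  obtain ⟨k0, hk0L, hk0⟩ := hmv
  have hival : ∀ k, k ≤ L → f k i = f 0 i := by
    intro k
    induction k with
    | zero => intro _; rfl
    | succ m ih => intro hm; rw [hfix m (by omega)]; exact ih (by omega)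
  rcases Nat.lt_or_ge n 3 with hn | hn
  · have hpos := Nat.pos_of_ne_zero (NeZero.ne n)
    have hn12 : n = 1 ∨ n = 2 := by omega
    rcases hn12 with hn1 | hn2
    · subst hn1
      have hii : i + 1 = i := Subsingleton.elim _ _
      rw [hii] at hk0
      exact hk0 (hfix k0 hk0L)
    · subst hn2
      set j := i + 1 with hj
      have hj1v : j - 1 = i := add_sub_cancel_right _ _
      have hj2v : j + 1 = i := by
        have htwo : (1 + 1 : Fin 2) = 0 := rfl
        rw [hj, add_assoc, htwo, add_zero]
      obtain ⟨⟨k1, hk1, w1f, w1t⟩, ⟨k2, hk2, w2t, w2f⟩⟩ :=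
        flips_both (fun t => f t j) L (congrFun hcycle j) k0 hk0L hk0
      have w1f' : f k1 j = false := w1f
      have w1t' : f (k1 + 1) j = true := w1t
      have w2t' : f k2 j = true := w2t
      have w2f' : f (k2 + 1) j = false := w2f
      have st1 := step_flip G (hsteps k1 hk1) (j := j) (by rw [w1t', w1f']; simp)
      have W1 := unhappyF G (f k1) j st1.1 w1f'
      have st2 := step_flip G (hsteps k2 hk2) (j := j) (by rw [w2t', w2f']; simp)
      have W2 := unhappyT G (f k2) j st2.1 w2t'
      rw [hj2v, hj1v, hival k1 (le_of_lt hk1)] at W1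
      rw [hj2v, hj1v, hival k2 (le_of_lt hk2)] at W2
      exact absurd W2 (lt_asymm W1)
  · -- n ≥ 3
    have h1ne : (1 : Fin n) ≠ 0 := fin_one_ne_zero' (by omega)
    have h2ne : (1 + 1 : Fin n) ≠ 0 := fin_two_ne_zero' hn
    have hsubne : ∀ j : Fin n, j - 1 ≠ j := fun j h => h1ne (sub_eq_self.mp h)
    have haddne : ∀ j : Fin n, j + 1 ≠ j := fun j h => h1ne (add_eq_left.mp h)
    have hA : i + 1 ≠ i - 1 := by
      intro h
      have h2 : i + (1 + 1) = i := by rw [← add_assoc, h, sub_add_cancel]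
      exact h2ne (add_eq_left.mp h2)
    have hd1 : i + 1 ≠ i := haddne i
    have hB : i - 1 - 1 ≠ i - 1 := hsubne (i - 1)
    have hC : i - 1 - 1 ≠ i := by
      intro h
      rw [sub_sub] at h
      exact h2ne (sub_eq_self.mp h)
    have key : ∀ k, k < L → Phi f i (k + 1) ≤ Phi f i k ∧
        (f (k + 1) (i + 1) ≠ f k (i + 1) → Phi f i (k + 1) + 1 ≤ Phi f i k) := by
      intro k hk
      obtain ⟨j, hbr, hupd⟩ := hsteps k hk
      have hchange : f (k + 1) j = !(f k j) := by rw [hupd]; simp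
      have hflip : f (k + 1) j ≠ f k j := by rw [hchange]; exact Bool.not_ne_self _
      have hother : ∀ e, e ≠ j → f (k + 1) e = f k e := by
        intro e he; rw [hupd]; exact Function.update_of_ne he _ _
      have hji : j ≠ i := by intro h; subst h; exact hflip (hfix k hk)
      obtain ⟨⟨k1, hk1, w1f, w1t⟩, ⟨k2, hk2, w2t, w2f⟩⟩ :=
        flips_both (fun t => f t j) L (congrFun hcycle j) k hk hflip
      have w1f' : f k1 j = false := w1f
      have w1t' : f (k1 + 1) j = true := w1t
      have w2t' : f k2 j = true := w2t
      have w2f' : f (k2 + 1) j = false := w2f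
      have st1 := step_flip G (hsteps k1 hk1) (j := j) (by rw [w1t', w1f']; simp)
      have W1 := unhappyF G (f k1) j st1.1 w1f'
      have st2 := step_flip G (hsteps k2 hk2) (j := j) (by rw [w2t', w2f']; simp)
      have W2 := unhappyT G (f k2) j st2.1 w2t'
      have hrest : ∀ e, e ≠ j - 1 → e ≠ j → Wf f i (k + 1) e = Wf f i k e := by
        intro e h1 h2
        have r1 : f (k + 1) e = f k e := hother e h2
        have r2 : f (k + 1) (e + 1) = f k (e + 1) := by
          refine hother (e + 1) (fun hh => h1 ?_)
          rw [← hh, add_sub_cancel_right]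
        unfold Wf
        rw [r1, r2]
      have hex : Phi f i (k + 1) + (Wf f i k (j - 1) + Wf f i k j)
          = Phi f i k + (Wf f i (k + 1) (j - 1) + Wf f i (k + 1) j) :=
        sum_exchange (Wf f i k) (Wf f i (k + 1)) (j - 1) j (hsubne j) hrest
      rcases eq_or_ne j (i + 1) with hj | hj1
      · have hj1v : j - 1 = i := by rw [hj]; exact add_sub_cancel_right _ _
        rw [hj1v, hival k1 (le_of_lt hk1)] at W1
        rw [hj1v, hival k2 (le_of_lt hk2)] at W2
        have hb1 : G.d1 j 1 < G.d0 j (if f 0 i = true then 2 else 1) :=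
          lt_of_le_of_lt ((G.mono1 j).monotone (by split <;> omega)) W1
        have hb2 : G.d0 j (if f 0 i = true then 2 else 1) < G.d1 j 2 :=
          lt_of_lt_of_le W2 ((G.mono1 j).monotone (by split <;> omega))
        have hmain : f (k + 1) j = f (k + 1) (j + 1) ∧ f k j ≠ f k (j + 1) := by
          cases hd : f k j with
          | false =>
            have Wc := unhappyF G (f k) j hbr hd
            rw [hj1v, hival k (le_of_lt hk)] at Wc
            have hcT : f k (j + 1) = true := by
              cases hc : f k (j + 1) with
              | true => rfl
              | false =>
                rw [hc] at Wc; simp at Wc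
                exact absurd Wc (lt_asymm hb2)
            constructor
            · rw [hchange, hd, hother (j + 1) (haddne j), hcT]; rfl
            · simp [hcT]
          | true =>
            have Wc := unhappyT G (f k) j hbr hd
            rw [hj1v, hival k (le_of_lt hk)] at Wc
            have hcF : f k (j + 1) = false := by
              cases hc : f k (j + 1) with
              | false => rfl
              | true =>
                rw [hc] at Wc; simp at Wc
                exact absurd Wc (lt_asymm hb1)
            constructor
            · rw [hchange, hd, hother (j + 1) (haddne j), hcF]; rfl
            · simp [hcF]
        have v1 : Wf f i k (j - 1) = 0 := by
          unfold Wf; rw [if_neg]; rintro ⟨-, h2, -⟩; exact h2 hj1v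
        have v2 : Wf f i (k + 1) (j - 1) = 0 := by
          unfold Wf; rw [if_neg]; rintro ⟨-, h2, -⟩; exact h2 hj1v
        have v3 : Wf f i k j = 1 := by
          unfold Wf; rw [if_pos]
          exact ⟨by rw [hj]; exact hA, by rw [hj]; exact hd1, hmain.2⟩
        have v4 : Wf f i (k + 1) j = 0 := by
          unfold Wf; rw [if_neg]; rintro ⟨-, -, h3⟩; exact h3 hmain.1
        rw [v1, v2, v3, v4] at hex
        exact ⟨by omega, fun _ => by omega⟩
      · rcases eq_or_ne j (i - 1) with hj2 | hj2
        · have hj2v : j + 1 = i := by rw [hj2, sub_add_cancel]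
          have hjj : j - 1 + 1 = j := by rw [sub_add_cancel]
          rw [hj2v, hival k1 (le_of_lt hk1)] at W1
          rw [hj2v, hival k2 (le_of_lt hk2)] at W2
          have hb2 : G.d1 j (if f 0 i = false then 2 else 1) < G.d0 j 2 :=
            lt_of_lt_of_le W1 ((G.mono0 j).monotone (by split <;> omega))
          have hb1 : G.d0 j 1 < G.d1 j (if f 0 i = false then 2 else 1) :=
            lt_of_le_of_lt ((G.mono0 j).monotone (by split <;> omega)) W2
          have hmain : f (k + 1) (j - 1) = f (k + 1) j ∧ f k (j - 1) ≠ f k j := by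
            cases hd : f k j with
            | false =>
              have Wc := unhappyF G (f k) j hbr hd
              rw [hj2v, hival k (le_of_lt hk)] at Wc
              have hcT : f k (j - 1) = true := by
                cases hc : f k (j - 1) with
                | true => rfl
                | false =>
                  rw [hc] at Wc; simp at Wc
                  exact absurd Wc (lt_asymm hb1)
              constructor
              · rw [hchange, hd, hother (j - 1) (hsubne j), hcT]; rfl
              · simp [hcT]
            | true =>
              have Wc := unhappyT G (f k) j hbr hd
              rw [hj2v, hival k (le_of_lt hk)] at Wc
              have hcF : f k (j - 1) = false := by
                cases hc : f k (j - 1) with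
                | false => rfl
                | true =>
                  rw [hc] at Wc; simp at Wc
                  exact absurd Wc (lt_asymm hb2)
              constructor
              · rw [hchange, hd, hother (j - 1) (hsubne j), hcF]; rfl
              · simp [hcF]
          have v1 : Wf f i k j = 0 := by
            unfold Wf; rw [if_neg]; rintro ⟨h1, -, -⟩; exact h1 hj2
          have v2 : Wf f i (k + 1) j = 0 := by
            unfold Wf; rw [if_neg]; rintro ⟨h1, -, -⟩; exact h1 hj2
          have v3 : Wf f i k (j - 1) = 1 := by
            unfold Wf; rw [if_pos]
            refine ⟨by rw [hj2]; exact hB, by rw [hj2]; exact hC, ?_⟩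
            rw [hjj]; exact hmain.2
          have v4 : Wf f i (k + 1) (j - 1) = 0 := by
            unfold Wf; rw [if_neg]; rintro ⟨-, -, h3⟩
            rw [hjj] at h3; exact h3 hmain.1
          rw [v1, v2, v3, v4] at hex
          exact ⟨by omega, fun _ => by omega⟩
        · -- middle player
          have s1 : j - 1 ≠ i - 1 := by
            intro h; apply hji
            have := congrArg (· + 1) h
            simpa [sub_add_cancel] using this
          have s2 : j - 1 ≠ i := by
            intro h; apply hj1; rw [← h, sub_add_cancel]
          have hjj : j - 1 + 1 = j := by rw [sub_add_cancel]
          have e1 : ∀ t, Wf f i t (j - 1) = if f t (j - 1) ≠ f t j then 1 else 0 := by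
            intro t; unfold Wf; rw [hjj]; simp [s1, s2]
          have e2 : ∀ t, Wf f i t j = if f t j ≠ f t (j + 1) then 1 else 0 := by
            intro t; unfold Wf; simp [hj2, hji]
          have r1 : f (k + 1) (j - 1) = f k (j - 1) := hother _ (hsubne j)
          have r2 : f (k + 1) (j + 1) = f k (j + 1) := hother _ (haddne j)
          have hpair : Wf f i (k + 1) (j - 1) + Wf f i (k + 1) j
              ≤ Wf f i k (j - 1) + Wf f i k j := by
            rw [e1 (k + 1), e1 k, e2 (k + 1), e2 k, r1, r2, hchange]
            cases hd : f k j with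
            | false =>
              have Wc := unhappyF G (f k) j hbr hd
              have hexcl : ¬(f k (j - 1) = false ∧ f k (j + 1) = false) := by
                rintro ⟨ha, hc⟩
                rw [ha, hc] at Wc; simp at Wc
                have q1 : G.d0 j 1 ≤ G.d0 j (if f k2 (j - 1) = true then 2 else 1) :=
                  (G.mono0 j).monotone (by split <;> omega)
                have q2 : G.d1 j (if f k2 (j + 1) = false then 2 else 1) ≤ G.d1 j 2 :=
                  (G.mono1 j).monotone (by split <;> omega)
                have : G.d0 j 1 < G.d0 j 1 :=
                  lt_of_le_of_lt q1 (lt_of_lt_of_le W2 (le_trans q2 (le_of_lt Wc)))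
                exact absurd this (lt_irrefl _)
              cases ha : f k (j - 1) <;> cases hc : f k (j + 1)
              · exact absurd ⟨ha, hc⟩ hexcl
              · decide
              · decide
              · decide
            | true =>
              have Wc := unhappyT G (f k) j hbr hd
              have hexcl : ¬(f k (j - 1) = true ∧ f k (j + 1) = true) := by
                rintro ⟨ha, hc⟩
                rw [ha, hc] at Wc; simp at Wc
                have q1 : G.d1 j 1 ≤ G.d1 j (if f k1 (j + 1) = false then 2 else 1) :=
                  (G.mono1 j).monotone (by split <;> omega)
                have q2 : G.d0 j (if f k1 (j - 1) = true then 2 else 1) ≤ G.d0 j 2 :=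
                  (G.mono0 j).monotone (by split <;> omega)
                have : G.d1 j 1 < G.d1 j 1 :=
                  lt_of_le_of_lt q1 (lt_of_lt_of_le W1 (le_trans q2 (le_of_lt Wc)))
                exact absurd this (lt_irrefl _)
              cases ha : f k (j - 1) <;> cases hc : f k (j + 1)
              · decide
              · decide
              · decide
              · exact absurd ⟨ha, hc⟩ hexcl
          refine ⟨by omega, fun hx =>
            absurd (hother (i + 1) (fun hh => hj1 hh.symm)) hx⟩
    have dec : ∀ b, b ≤ L → ∀ a, a ≤ b → Phi f i b ≤ Phi f i a := by
      intro b
      induction b with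
      | zero => intro _ a ha; rw [Nat.le_zero.mp ha]
      | succ m ih =>
        intro hm a ha
        rcases Nat.eq_or_lt_of_le ha with h | h
        · rw [h]
        · exact le_trans (key m (by omega)).1 (ih (by omega) a (by omega))
    have hstrict := (key k0 hk0L).2 hk0
    have h0L : Phi f i L = Phi f i 0 := by
      unfold Phi Wf; simp only [hcycle]
    have d1' := dec L (le_refl L) (k0 + 1) (by omega)
    have d2' := dec k0 (by omega) 0 (by omega)
    omega

end TwiceMain

/-- Let `G` be a player-specific congestion game on a circle whose
transition graph contains a directed cycle. Then every player changes its strategy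
at least twice on every directed cycle of `TG(G)`. -/
theorem circle_every_player_changes_twice_on_cycle
    (n : ℕ) [NeZero n] (G : CircleGame n)
    (L : ℕ) (f : ℕ → Fin n → Bool) (hL : 0 < L)
    (hsteps : ∀ k, k < L → G.Step (f k) (f (k + 1)))
    (hcycle : f L = f 0) (i : Fin n) :
    2 ≤ ((Finset.range L).filter fun k => f (k + 1) i ≠ f k i).card := by
  classical
  have hpar := flip_parity (fun k => f k i) L
  rw [if_pos (congrFun hcycle i)] at hpar
  open Fin.NatCast in
  have hone : ∃ k, k < L ∧ f (k + 1) i ≠ f k i := by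
    by_contra hmv
    push_neg at hmv
    have hall : ∀ m : ℕ, ∀ k, k < L → f (k + 1) (i + (m : Fin n)) = f k (i + (m : Fin n)) := by
      intro m
      induction m with
      | zero => simpa using hmv
      | succ p ih =>
        have hstep := lemA G L f hsteps hcycle (i + (p : Fin n)) ih
        intro k hk
        have hcast : ((p + 1 : ℕ) : Fin n) = (p : Fin n) + 1 := by push_cast; ring
        rw [hcast, ← add_assoc]
        exact hstep k hk
    have hfix' : ∀ j : Fin n, ∀ k, k < L → f (k + 1) j = f k j := by
      intro j
      have h := hall ((j - i).val)
      rwa [Fin.cast_val_eq_self, add_comm, sub_add_cancel] at h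
    obtain ⟨j, hbr, hupd⟩ := hsteps 0 hL
    have h1 : f 1 j = !(f 0 j) := by rw [hupd]; simp
    rw [hfix' j 0 hL] at h1
    exact Bool.not_ne_self (f 0 j) h1.symm
  obtain ⟨k, hk, hne⟩ := hone
  have hmem : k ∈ (Finset.range L).filter (fun k => f (k + 1) i ≠ f k i) := by
    simp only [Finset.mem_filter, Finset.mem_range]
    exact ⟨hk, hne⟩
  have hcard : 1 ≤ ((Finset.range L).filter fun k => f (k + 1) i ≠ f k i).card :=
    Finset.card_pos.mpr ⟨k, hmem⟩
  omega
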